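/- Let (W,S) be a Coxeter system and s ∈ S, w, x ∈ W. Then l(wsx) > l(wx) if and only if l(ws) − l(w) = l(sx) − l(x). -/

import Mathlib

namespace Stmt16Aux

open List CoxeterSystem
open scoped Classical
set_option linter.unusedSectionVars false

variable {B W : Type*} [Group W] {M : CoxeterMatrix B} (cs : CoxeterSystem M W)

/-- The sign: `-1` to the number of occurrences of `t` in `l`. -/
noncomputable def sgn (t : W) (l : List W) : ℤˣ :=
  (l.map (fun r => if r = t then (-1 : ℤˣ) else 1)).prod

lemma sgn_nil (t : W) : sgn t ([] : List W) = 1 := rfl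

lemma sgn_cons (t a : W) (l : List W) :
    sgn t (a :: l) = (if a = t then (-1 : ℤˣ) else 1) * sgn t l := by
  simp [sgn]

lemma sgn_append (t : W) (l₁ l₂ : List W) :
    sgn t (l₁ ++ l₂) = sgn t l₁ * sgn t l₂ := by
  simp [sgn]

lemma sgn_eq_one_of_not_mem {t : W} {l : List W} (h : t ∉ l) : sgn t l = 1 := by
  induction l with
  | nil => rfl
  | cons a l ih =>
    rw [sgn_cons, if_neg (by rintro rfl; exact h mem_cons_self),
      ih (fun hm => h (mem_cons_of_mem a hm)), one_mul]

lemma mem_of_sgn_ne_one {t : W} {l : List W} (h : sgn t l ≠ 1) : t ∈ l :=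
  by_contra fun hm => h (sgn_eq_one_of_not_mem hm)

noncomputable def epFun (i : B) : W × ℤˣ → W × ℤˣ := fun p =>
  (cs.simple i * p.1 * cs.simple i, if p.1 = cs.simple i then -p.2 else p.2)

lemma epFun_involutive (i : B) : Function.Involutive (epFun cs i) := by
  intro p
  unfold epFun
  have hc : cs.simple i * (cs.simple i * p.1 * cs.simple i) * cs.simple i = p.1 := by
    rw [← mul_assoc]
    rw [cs.simple_mul_simple_cancel_left]
    rw [cs.simple_mul_simple_cancel_right]
  have hcond : (cs.simple i * p.1 * cs.simple i = cs.simple i) ↔ p.1 = cs.simple i := by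
    constructor
    · intro h
      have := congrArg (fun z => cs.simple i * z * cs.simple i) h
      rw [hc] at this
      rw [this, cs.simple_mul_simple_cancel_right]
    · rintro h
      rw [h, cs.simple_mul_simple_self, one_mul]
  ext
  · exact hc
  · by_cases h : p.1 = cs.simple i <;>
      simp [h, hcond]

/-- The permutation of `W × ℤˣ` attached to a simple reflection. -/
noncomputable def ep (i : B) : Equiv.Perm (W × ℤˣ) := (epFun_involutive cs i).toPerm

lemma ep_apply (i : B) (p : W × ℤˣ) : ep cs i p = epFun cs i p := rfl

/-- Product of the permutations attached to a word. -/
noncomputable def Ep (ω : List B) : Equiv.Perm (W × ℤˣ) := (ω.map (ep cs)).prod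

lemma Ep_nil : Ep cs ([] : List B) = 1 := rfl

lemma Ep_cons (i : B) (ω : List B) : Ep cs (i :: ω) = ep cs i * Ep cs ω := by
  simp [Ep]

lemma Ep_append (ω₁ ω₂ : List B) : Ep cs (ω₁ ++ ω₂) = Ep cs ω₁ * Ep cs ω₂ := by
  simp [Ep]

lemma rightInvSeq_cons (i : B) (ω : List B) :
    cs.rightInvSeq (i :: ω) =
      ((cs.wordProd ω)⁻¹ * cs.simple i * cs.wordProd ω) :: cs.rightInvSeq ω := rfl

lemma Ep_apply (ω : List B) (t : W) (ε : ℤˣ) :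
    Ep cs ω (t, ε) =
      (cs.wordProd ω * t * (cs.wordProd ω)⁻¹, sgn t (cs.rightInvSeq ω) * ε) := by
  induction ω with
  | nil => simp [Ep_nil, sgn_nil]
  | cons i ω ih =>
    rw [Ep_cons, Equiv.Perm.mul_apply, ih, rightInvSeq_cons, sgn_cons, ep_apply]
    unfold epFun
    simp only [cs.wordProd_cons]
    have hcond : (cs.wordProd ω * t * (cs.wordProd ω)⁻¹ = cs.simple i) ↔
        ((cs.wordProd ω)⁻¹ * cs.simple i * cs.wordProd ω = t) := by
      constructor
      · intro h
        rw [← h]; group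
      · intro h
        rw [← h]; group
    ext
    · simp only
      rw [mul_inv_rev, cs.inv_simple]
      group
    · simp only
      by_cases h : (cs.wordProd ω)⁻¹ * cs.simple i * cs.wordProd ω = t
      · rw [if_pos (hcond.mpr h), if_pos h]
        simp [mul_assoc]
      · rw [if_neg (fun hh => h (hcond.mp hh)), if_neg h, one_mul]

lemma alt_add_even (i i' : B) {n : ℕ} (hn : Even n) (m : ℕ) :
    alternatingWord i i' (m + n) =
      alternatingWord i i' m ++ alternatingWord i i' n := by
  induction m with
  | zero => simp [alternatingWord]
  | succ m ih =>
    have h1 : m + 1 + n = (m + n) + 1 := by omega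
    rw [h1, alternatingWord_succ', ih, alternatingWord_succ']
    have h2 : Even (m + n) ↔ Even m := by
      rcases hn with ⟨r, rfl⟩; simp [Nat.even_add]
    by_cases hm : Even m
    · rw [if_pos (h2.mpr hm), if_pos hm, cons_append]
    · rw [if_neg (fun hh => hm (h2.mp hh)), if_neg hm, cons_append]

lemma alt_add_odd (i i' : B) {n : ℕ} (hn : ¬ Even n) (m : ℕ) :
    alternatingWord i i' (m + n) =
      alternatingWord i' i m ++ alternatingWord i i' n := by
  induction m with
  | zero => simp [alternatingWord]
  | succ m ih =>
    have h1 : m + 1 + n = (m + n) + 1 := by omega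
    rw [h1, alternatingWord_succ', ih, alternatingWord_succ']
    have h2 : Even (m + n) ↔ ¬ Even m := by
      simp only [Nat.even_iff] at hn ⊢
      omega
    by_cases hm : Even m
    · rw [if_neg (fun hh => (h2.mp hh) hm), if_pos hm, cons_append]
    · rw [if_pos (h2.mpr hm), if_neg hm, cons_append]

lemma alt_drop (i i' : B) : ∀ (m k : ℕ),
    (alternatingWord i i' m).drop k = alternatingWord i i' (m - k) := by
  intro m
  induction m with
  | zero => intro k; simp [alternatingWord]
  | succ m ih =>
    intro k
    match k with
    | 0 => simp
    | k + 1 =>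
      rw [alternatingWord_succ', List.drop_succ_cons, ih k,
        show m + 1 - (k + 1) = m - k by omega]

lemma prod_alt_add (i i' : B) (k : ℕ) :
    cs.wordProd (alternatingWord i i' (M i i' + k)) =
      cs.wordProd (braidWord M i i') * cs.wordProd (alternatingWord i i' k) := by
  by_cases hk : Even k
  · rw [alt_add_even i i' hk (M i i'), cs.wordProd_append]
  · rw [alt_add_odd i i' hk (M i i'), cs.wordProd_append]
    congr 1
    have h := cs.wordProd_braidWord_eq i' i
    rw [show braidWord M i' i = alternatingWord i' i (M i' i) from rfl,
      show braidWord M i i' = alternatingWord i i' (M i i') from rfl,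
      M.symmetric i' i] at h
    exact h

lemma ris_alt_getD (i i' : B) (m j : ℕ) (hj : j < m) :
    (cs.rightInvSeq (alternatingWord i i' m)).getD j 1 =
      (cs.wordProd (alternatingWord i i' (m - (j + 1))))⁻¹ *
        cs.wordProd (alternatingWord i i' (m - j)) := by
  rw [cs.getD_rightInvSeq, alt_drop]
  have hmj : m - j = (m - j - 1) + 1 := by omega
  have hcons : alternatingWord i i' (m - j) =
      (if Even (m - j - 1) then i' else i) :: alternatingWord i i' (m - j - 1) := by
    conv_lhs => rw [hmj]
    rw [alternatingWord_succ']
  have hget : (alternatingWord i i' m)[j]? =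
      some (if Even (m - j - 1) then i' else i) := by
    rw [show j = j + 0 by omega, ← List.getElem?_drop,
      alt_drop, hcons]
    simp
  rw [hget]
  simp only [Option.map_some, Option.getD_some]
  rw [show m - (j + 1) = m - j - 1 by omega, mul_assoc]
  congr 1
  rw [hcons, cs.wordProd_cons]

lemma ris_alt_take_eq_drop (i i' : B) :
    (cs.rightInvSeq (alternatingWord i i' (2 * M i i'))).take (M i i') =
      (cs.rightInvSeq (alternatingWord i i' (2 * M i i'))).drop (M i i') := by
  apply List.ext_getElem
  · simp only [List.length_take, List.length_drop, cs.length_rightInvSeq,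
      length_alternatingWord]
    omega
  · intro j h1 h2
    simp only [List.length_take, cs.length_rightInvSeq, length_alternatingWord] at h1
    have hj : j < M i i' := by omega
    rw [List.getElem_take, List.getElem_drop,
      ← List.getD_eq_getElem _ 1, ← List.getD_eq_getElem _ 1,
      ris_alt_getD cs i i' _ _ (by omega),
      ris_alt_getD cs i i' _ _ (by omega),
      show 2 * M i i' - (j + 1) = M i i' + (M i i' - (j + 1)) by omega,
      show 2 * M i i' - j = M i i' + (M i i' - j) by omega,
      show 2 * M i i' - (M i i' + j + 1) = M i i' - (j + 1) by omega,
      show 2 * M i i' - (M i i' + j) = M i i' - j by omega,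
      prod_alt_add, prod_alt_add]
    simp [mul_inv_rev, mul_assoc]

lemma sgn_ris_alt (i i' : B) (t : W) :
    sgn t (cs.rightInvSeq (alternatingWord i i' (2 * M i i'))) = 1 := by
  conv_lhs => rw [← List.take_append_drop (M i i')
    (cs.rightInvSeq (alternatingWord i i' (2 * M i i')))]
  rw [sgn_append, ← ris_alt_take_eq_drop]
  exact Int.units_mul_self _

lemma Ep_alt (i i' : B) (m : ℕ) :
    Ep cs (alternatingWord i i' (2 * m)) = (ep cs i * ep cs i') ^ m := by
  induction m with
  | zero => simp [alternatingWord]; rfl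
  | succ m ih =>
    have he1 : ¬ Even (2 * m + 1) := by simp only [Nat.even_iff]; omega
    have he2 : Even (2 * m) := ⟨m, by omega⟩
    rw [show 2 * (m + 1) = (2 * m + 1) + 1 by omega, alternatingWord_succ',
      alternatingWord_succ', if_neg he1, if_pos he2,
      Ep_cons, Ep_cons, ih, pow_succ', mul_assoc]

lemma liftable : M.IsLiftable (fun i => ep cs i) := by
  intro i i'
  have he : Even (2 * M i i') := ⟨M i i', by omega⟩
  have h1 : cs.wordProd (alternatingWord i i' (2 * M i i')) = 1 := by
    rw [cs.prod_alternatingWord_eq_mul_pow, if_pos he,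
      show 2 * M i i' / 2 = M i i' by omega, one_mul, cs.simple_mul_simple_pow]
  apply Equiv.ext
  rintro ⟨t, ε⟩
  have h2 := Ep_apply cs (alternatingWord i i' (2 * M i i')) t ε
  rw [Ep_alt, h1, sgn_ris_alt] at h2
  simp only [one_mul, mul_one, inv_one] at h2
  rw [h2]
  rfl

/-- The sign homomorphism. -/
noncomputable def phi : W →* Equiv.Perm (W × ℤˣ) :=
  cs.lift ⟨fun i => ep cs i, liftable cs⟩

lemma phi_simple (i : B) : phi cs (cs.simple i) = ep cs i :=
  cs.lift_apply_simple (liftable cs) i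

lemma phi_wordProd (ω : List B) : phi cs (cs.wordProd ω) = Ep cs ω := by
  induction ω with
  | nil => simp [Ep_nil]
  | cons i ω ih => rw [cs.wordProd_cons, map_mul, phi_simple, ih, Ep_cons]

/-- The sign cocycle. -/
noncomputable def eta (w t : W) : ℤˣ := ((phi cs w) (t, 1)).2

lemma units_self_inv (u : ℤˣ) : u⁻¹ = u := by
  rcases Int.units_eq_one_or u with rfl | rfl <;> decide

lemma eta_eq_sgn (ω : List B) (t : W) :
    eta cs (cs.wordProd ω) t = sgn t (cs.rightInvSeq ω) := by
  unfold eta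
  rw [phi_wordProd, Ep_apply, mul_one]

lemma phi_apply (w t : W) (ε : ℤˣ) :
    phi cs w (t, ε) = (w * t * w⁻¹, eta cs w t * ε) := by
  obtain ⟨ω, rfl⟩ := cs.wordProd_surjective w
  rw [phi_wordProd, Ep_apply, eta_eq_sgn]

lemma eta_mul (u v t : W) :
    eta cs (u * v) t = eta cs u (v * t * v⁻¹) * eta cs v t := by
  have h1 : phi cs (u * v) (t, 1) = phi cs u (phi cs v (t, 1)) := by
    rw [map_mul]; rfl
  rw [phi_apply, phi_apply, phi_apply] at h1
  simpa using congrArg Prod.snd h1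

lemma eta_inv (w t : W) : eta cs w⁻¹ (w * t * w⁻¹) = eta cs w t := by
  have h1 : eta cs (w⁻¹ * w) t = eta cs w⁻¹ (w * t * w⁻¹) * eta cs w t := eta_mul cs w⁻¹ w t
  rw [inv_mul_cancel] at h1
  have h2 : eta cs 1 t = 1 := by unfold eta; rw [map_one]; rfl
  rw [h2] at h1
  rcases Int.units_eq_one_or (eta cs w t) with h | h <;>
    rcases Int.units_eq_one_or (eta cs w⁻¹ (w * t * w⁻¹)) with h' | h' <;>
    rw [h, h'] <;> rw [h, h'] at h1 <;> first | rfl | (exfalso; exact absurd h1 (by decide))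

lemma eta_simple (i : B) (t : W) :
    eta cs (cs.simple i) t = if t = cs.simple i then -1 else 1 := by
  unfold eta
  rw [phi_simple, ep_apply]
  unfold epFun
  by_cases h : t = cs.simple i <;> simp [h]

lemma eta_refl_self {t : W} (ht : cs.IsReflection t) : eta cs t t = -1 := by
  obtain ⟨w, i, rfl⟩ := ht
  have h1 := eta_mul cs (w * cs.simple i) w⁻¹ (w * cs.simple i * w⁻¹)
  have h2 : w⁻¹ * (w * cs.simple i * w⁻¹) * w⁻¹⁻¹ = cs.simple i := by group
  rw [h2] at h1
  have h3 : eta cs (w * cs.simple i) (cs.simple i)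
      = eta cs w (cs.simple i * cs.simple i * (cs.simple i)⁻¹) * eta cs (cs.simple i) (cs.simple i) :=
    eta_mul cs w (cs.simple i) (cs.simple i)
  have h4 : cs.simple i * cs.simple i * (cs.simple i)⁻¹ = cs.simple i := by group
  rw [h4, eta_simple, if_pos rfl] at h3
  have h5 : eta cs w⁻¹ (w * cs.simple i * w⁻¹) = eta cs w (cs.simple i) := eta_inv cs w (cs.simple i)
  rw [h1, h3, h5]
  rcases Int.units_eq_one_or (eta cs w (cs.simple i)) with h | h <;> rw [h] <;> decide

lemma isRightInversion_of_eta_neg {w t : W} (h : eta cs w t = -1) :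
    cs.IsRightInversion w t := by
  obtain ⟨ω, hl, rfl⟩ := cs.exists_reduced_word w
  have hred : cs.IsReduced ω := hl
  rw [eta_eq_sgn] at h
  have hmem : t ∈ cs.rightInvSeq ω := by
    apply mem_of_sgn_ne_one
    rw [h]; decide
  exact cs.isRightInversion_of_mem_rightInvSeq hred hmem

lemma eta_neg_of_isRightInversion {w t : W} (h : cs.IsRightInversion w t) :
    eta cs w t = -1 := by
  have hrefl := h.1
  have hvt : (w * t) * t = w := by
    rw [mul_assoc, hrefl.mul_self, mul_one]
  have hnv : ¬ cs.IsRightInversion (w * t) t := by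
    intro hc
    have := hc.2
    rw [hvt] at this
    exact absurd h.2 (by omega)
  have h4 : eta cs (w * t) t = 1 := by
    rcases Int.units_eq_one_or (eta cs (w * t) t) with h' | h'
    · exact h'
    · exact absurd (isRightInversion_of_eta_neg cs h') hnv
  have h5 : eta cs ((w * t) * t) t = eta cs (w * t) (t * t * t⁻¹) * eta cs t t :=
    eta_mul cs (w * t) t t
  rw [hvt, show t * t * t⁻¹ = t by group, h4, eta_refl_self cs hrefl, one_mul] at h5
  exact h5

lemma eta_eq_one_iff {t : W} (ht : cs.IsReflection t) (w : W) :
    eta cs w t = 1 ↔ cs.length w < cs.length (w * t) := by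
  constructor
  · intro h
    have hne := ht.length_mul_left_ne w
    have hnot : ¬ cs.IsRightInversion w t := by
      intro hc
      rw [eta_neg_of_isRightInversion cs hc] at h
      exact absurd h (by decide)
    have : ¬ cs.length (w * t) < cs.length w := fun hc => hnot ⟨ht, hc⟩
    omega
  · intro h
    rcases Int.units_eq_one_or (eta cs w t) with h' | h'
    · exact h'
    · have := (isRightInversion_of_eta_neg cs h').2
      omega

lemma main' (i : B) (w x : W) :
    cs.length (w * x) < cs.length (w * cs.simple i * x) ↔
      (cs.length w < cs.length (w * cs.simple i) ↔ cs.length x < cs.length (cs.simple i * x)) := by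
  set t' := x⁻¹ * cs.simple i * x with ht'def
  have ht' : cs.IsReflection t' := by
    have := (cs.isReflection_simple i).conj x⁻¹
    rwa [inv_inv] at this
  have hwsx : w * cs.simple i * x = (w * x) * t' := by
    rw [ht'def]; group
  have hxt' : x * t' = cs.simple i * x := by
    rw [ht'def]; group
  have h1 : cs.length (w * x) < cs.length (w * cs.simple i * x) ↔
      eta cs (w * x) t' = 1 := by
    rw [hwsx, eta_eq_one_iff cs ht']
  have h2 : eta cs (w * x) t' = eta cs w (cs.simple i) * eta cs x t' := by
    rw [eta_mul cs w x t']
    congr 2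
    rw [ht'def]; group
  have h3 : eta cs w (cs.simple i) = 1 ↔ cs.length w < cs.length (w * cs.simple i) :=
    eta_eq_one_iff cs (cs.isReflection_simple i) w
  have h4 : eta cs x t' = 1 ↔ cs.length x < cs.length (cs.simple i * x) := by
    rw [eta_eq_one_iff cs ht' x, hxt']
  rw [h1, h2, ← h3, ← h4]
  rcases Int.units_eq_one_or (eta cs w (cs.simple i)) with h | h <;>
    rcases Int.units_eq_one_or (eta cs x t') with h' | h' <;>
    rw [h, h'] <;> simp

end Stmt16Aux

/-- Let `(W, S)` be a Coxeter system with length function `l`, let `s ∈ S` and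
`w, x ∈ W`. Then `l(wsx) > l(wx)` if and only if `l(ws) − l(w) = l(sx) − l(x)`. -/
theorem stmt16 {B W : Type*} [Group W] {M : CoxeterMatrix B} (cs : CoxeterSystem M W)
    (i : B) (w x : W) :
    cs.length (w * cs.simple i * x) > cs.length (w * x) ↔
      (cs.length (w * cs.simple i) : ℤ) - cs.length w =
        (cs.length (cs.simple i * x) : ℤ) - cs.length x := by
  have h := Stmt16Aux.main' cs i w x
  rw [gt_iff_lt, h]
  rcases cs.length_mul_simple w i with hw | hw <;>
    rcases cs.length_simple_mul x i with hx | hx <;>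
    omega
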